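/- Let Θ = [(B + Wᵀ)/√2 ; (B − Wᵀ)/√2] (vertical block concatenation) for B ∈ ℝ^{n×k}, W ∈ ℝ^{k×n}, and let Λ_k be a symmetric n×n matrix. If ‖ΘΘᵀ − diag(2Λ_k, −2Λ_k)‖_F ≤ δ for some δ > 0, then ‖BW − Λ_k‖_F ≤ δ. -/

import Mathlib

open Matrix

/-- Frobenius norm of a real matrix. -/
noncomputable def frobNorm {m n : Type*} [Fintype m] [Fintype n] (A : Matrix m n ℝ) : ℝ :=
  Real.sqrt (∑ i, ∑ j, (A i j) ^ 2)

section helpers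

variable {m p q r : Type*} [Fintype m] [Fintype p] [Fintype q] [Fintype r]

/-- Frobenius inner product. -/
noncomputable def ip (A C : Matrix m p ℝ) : ℝ := ∑ i, ∑ j, A i j * C i j

/-- Squared Frobenius norm. -/
noncomputable def n2 (A : Matrix m p ℝ) : ℝ := ip A A

lemma frobNorm_eq (A : Matrix m p ℝ) : frobNorm A = Real.sqrt (n2 A) := by
  simp [frobNorm, n2, ip, sq]

lemma n2_nonneg (A : Matrix m p ℝ) : 0 ≤ n2 A := by
  apply Finset.sum_nonneg; intro i _
  apply Finset.sum_nonneg; intro j _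
  exact mul_self_nonneg _

lemma ip_eq_trace (A C : Matrix m p ℝ) : ip A C = Matrix.trace (A * Cᵀ) := by
  simp [ip, Matrix.trace, Matrix.diag, Matrix.mul_apply]

lemma n2_eq_trace (A : Matrix m p ℝ) : n2 A = Matrix.trace (A * Aᵀ) := ip_eq_trace A A

lemma ip_comm (A C : Matrix m p ℝ) : ip A C = ip C A := by
  simp [ip, mul_comm]

lemma ip_transpose (A C : Matrix m p ℝ) : ip Aᵀ Cᵀ = ip A C := by
  rw [ip, Finset.sum_comm]; simp [ip]

lemma n2_transpose (A : Matrix m p ℝ) : n2 Aᵀ = n2 A := ip_transpose A A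

lemma ip_sq_le (A C : Matrix m p ℝ) : (ip A C) ^ 2 ≤ n2 A * n2 C := by
  have h := Finset.sum_mul_sq_le_sq_mul_sq (Finset.univ : Finset (m × p))
    (fun x => A x.1 x.2) (fun x => C x.1 x.2)
  simpa [ip, n2, Fintype.sum_prod_type, sq] using h

lemma n2_fromBlocks (A₁ : Matrix m p ℝ) (A₂ : Matrix m q ℝ) (A₃ : Matrix r p ℝ)
    (A₄ : Matrix r q ℝ) :
    n2 (Matrix.fromBlocks A₁ A₂ A₃ A₄) = n2 A₁ + n2 A₂ + n2 A₃ + n2 A₄ := by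
  simp only [n2, ip, Fintype.sum_sum_type, Matrix.fromBlocks_apply₁₁,
    Matrix.fromBlocks_apply₁₂, Matrix.fromBlocks_apply₂₁, Matrix.fromBlocks_apply₂₂,
    Finset.sum_add_distrib]
  ring

lemma fromBlocks_sub' (A₁ B₁ : Matrix m p ℝ) (A₂ B₂ : Matrix m q ℝ) (A₃ B₃ : Matrix r p ℝ)
    (A₄ B₄ : Matrix r q ℝ) :
    Matrix.fromBlocks A₁ A₂ A₃ A₄ - Matrix.fromBlocks B₁ B₂ B₃ B₄ =
      Matrix.fromBlocks (A₁ - B₁) (A₂ - B₂) (A₃ - B₃) (A₄ - B₄) := by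
  ext (i | i) (j | j) <;> simp

lemma n2_parallelogram (U V : Matrix m p ℝ) :
    n2 (U + V) + n2 (U - V) = 2 * n2 U + 2 * n2 V := by
  simp only [n2_eq_trace, Matrix.transpose_add, Matrix.transpose_sub, Matrix.mul_add,
    Matrix.add_mul, Matrix.mul_sub, Matrix.sub_mul, Matrix.trace_add, Matrix.trace_sub]
  ring

lemma trace_transpose_mul' (A C : Matrix m p ℝ) :
    Matrix.trace (C * Aᵀ) = Matrix.trace (A * Cᵀ) := by
  rw [← Matrix.trace_transpose (C * Aᵀ), Matrix.transpose_mul, Matrix.transpose_transpose,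
    Matrix.trace_mul_comm]

lemma n2_sub (A C : Matrix m p ℝ) : n2 (A - C) = n2 A - 2 * ip A C + n2 C := by
  simp only [n2_eq_trace, ip_eq_trace, Matrix.transpose_sub, Matrix.mul_sub, Matrix.sub_mul,
    Matrix.trace_sub]
  rw [trace_transpose_mul' A C]
  ring

lemma n2_add (A C : Matrix m p ℝ) : n2 (A + C) = n2 A + 2 * ip A C + n2 C := by
  simp only [n2_eq_trace, ip_eq_trace, Matrix.transpose_add, Matrix.mul_add, Matrix.add_mul,
    Matrix.trace_add]
  rw [trace_transpose_mul' A C]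
  ring

lemma ip_smul_right (c : ℝ) (A C : Matrix m p ℝ) : ip A (c • C) = c * ip A C := by
  simp only [ip, Matrix.smul_apply, smul_eq_mul, Finset.mul_sum]
  apply Finset.sum_congr rfl; intro i _
  apply Finset.sum_congr rfl; intro j _
  ring

lemma n2_smul (c : ℝ) (A : Matrix m p ℝ) : n2 (c • A) = c ^ 2 * n2 A := by
  simp only [n2, ip, Matrix.smul_apply, smul_eq_mul, Finset.mul_sum]
  apply Finset.sum_congr rfl; intro i _
  apply Finset.sum_congr rfl; intro j _
  ring

end helpers

set_option maxHeartbeats 2000000 in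
/-- If `Θ = [(B + Wᵀ)/√2 ; (B − Wᵀ)/√2]` satisfies
`‖ΘΘᵀ − diag(2Λ_k, −2Λ_k)‖_F ≤ δ` for a symmetric `Λ_k` and some `δ > 0`, then
`‖BW − Λ_k‖_F ≤ δ`. -/
theorem stmt_2 {n k : ℕ} (B : Matrix (Fin n) (Fin k) ℝ) (W : Matrix (Fin k) (Fin n) ℝ)
    (Λ : Matrix (Fin n) (Fin n) ℝ) (hΛ : Λ.IsSymm) (δ : ℝ) (hδ : 0 < δ)
    (Θ : Matrix (Fin n ⊕ Fin n) (Fin k) ℝ)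
    (hΘ : Θ = Matrix.fromRows ((Real.sqrt 2)⁻¹ • (B + Wᵀ)) ((Real.sqrt 2)⁻¹ • (B - Wᵀ)))
    (h : frobNorm (Θ * Θᵀ - Matrix.fromBlocks ((2 : ℝ) • Λ) 0 0 ((-2 : ℝ) • Λ)) ≤ δ) :
    frobNorm (B * W - Λ) ≤ δ := by
  have hΛt : Λᵀ = Λ := hΛ
  set E : Matrix (Fin n) (Fin n) ℝ := B * Bᵀ with hE
  set F : Matrix (Fin n) (Fin n) ℝ := Wᵀ * W with hF
  set P : Matrix (Fin n) (Fin n) ℝ := B * W with hP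
  set a : Matrix (Fin n) (Fin n) ℝ := (1/2 : ℝ) • (P + Pᵀ) with ha
  set Z : Matrix (Fin n) (Fin n) ℝ := (1/2 : ℝ) • (P - Pᵀ) with hZ
  set R : Matrix (Fin n) (Fin n) ℝ := (1/2 : ℝ) • (E + F) with hR
  set C : Matrix (Fin n) (Fin n) ℝ := (1/2 : ℝ) • (E - F) with hC
  set V : Matrix (Fin n) (Fin n) ℝ := a - (2 : ℝ) • Λ with hV
  have hc : (Real.sqrt 2)⁻¹ * (Real.sqrt 2)⁻¹ = (1/2 : ℝ) := by
    rw [← mul_inv, Real.mul_self_sqrt (by norm_num : (0:ℝ) ≤ 2)]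
    norm_num
  -- block decomposition
  have hMeq : Θ * Θᵀ - Matrix.fromBlocks ((2 : ℝ) • Λ) 0 0 ((-2 : ℝ) • Λ) =
      Matrix.fromBlocks (R + V) (C - Z) (C + Z) (R - V) := by
    subst hΘ
    rw [Matrix.transpose_fromRows, Matrix.fromRows_mul_fromCols, fromBlocks_sub']
    have hsm : ∀ (X Y : Matrix (Fin n) (Fin k) ℝ),
        ((Real.sqrt 2)⁻¹ • X) * ((Real.sqrt 2)⁻¹ • Y)ᵀ = (1/2 : ℝ) • (X * Yᵀ) := by
      intro X Y
      rw [Matrix.transpose_smul, Matrix.smul_mul, Matrix.mul_smul, smul_smul, hc]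
    have e11 : ((Real.sqrt 2)⁻¹ • (B + Wᵀ)) * ((Real.sqrt 2)⁻¹ • (B + Wᵀ))ᵀ - (2:ℝ) • Λ
        = R + V := by
      rw [hsm, Matrix.transpose_add, Matrix.transpose_transpose, hR, hV, ha]
      have : (B + Wᵀ) * (Bᵀ + W) = E + F + (P + Pᵀ) := by
        rw [hE, hF, hP, Matrix.transpose_mul]
        simp only [Matrix.add_mul, Matrix.mul_add]
        abel
      rw [this]
      module
    have e12 : ((Real.sqrt 2)⁻¹ • (B + Wᵀ)) * ((Real.sqrt 2)⁻¹ • (B - Wᵀ))ᵀ - 0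
        = C - Z := by
      rw [hsm, Matrix.transpose_sub, Matrix.transpose_transpose, hC, hZ]
      have : (B + Wᵀ) * (Bᵀ - W) = E - F - (P - Pᵀ) := by
        rw [hE, hF, hP, Matrix.transpose_mul]
        simp only [Matrix.add_mul, Matrix.mul_sub, Matrix.sub_mul, Matrix.mul_add]
        abel
      rw [this, sub_zero]
      module
    have e21 : ((Real.sqrt 2)⁻¹ • (B - Wᵀ)) * ((Real.sqrt 2)⁻¹ • (B + Wᵀ))ᵀ - 0
        = C + Z := by
      rw [hsm, Matrix.transpose_add, Matrix.transpose_transpose, hC, hZ]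
      have : (B - Wᵀ) * (Bᵀ + W) = E - F + (P - Pᵀ) := by
        rw [hE, hF, hP, Matrix.transpose_mul]
        simp only [Matrix.add_mul, Matrix.mul_sub, Matrix.sub_mul, Matrix.mul_add]
        abel
      rw [this, sub_zero]
      module
    have e22 : ((Real.sqrt 2)⁻¹ • (B - Wᵀ)) * ((Real.sqrt 2)⁻¹ • (B - Wᵀ))ᵀ - (-2:ℝ) • Λ
        = R - V := by
      rw [hsm, Matrix.transpose_sub, Matrix.transpose_transpose, hR, hV, ha]
      have : (B - Wᵀ) * (Bᵀ - W) = E + F - (P + Pᵀ) := by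
        rw [hE, hF, hP, Matrix.transpose_mul]
        simp only [Matrix.mul_sub, Matrix.sub_mul]
        abel
      rw [this]
      module
    rw [e11, e12, e21, e22]
  -- the bound on the squared norm of the block matrix
  have hMbound : n2 (Matrix.fromBlocks (R + V) (C - Z) (C + Z) (R - V)) ≤ δ ^ 2 := by
    rw [← hMeq]
    rw [frobNorm_eq] at h
    have h0 := n2_nonneg (Θ * Θᵀ - Matrix.fromBlocks ((2 : ℝ) • Λ) 0 0 ((-2 : ℝ) • Λ))
    nlinarith [Real.sq_sqrt h0, Real.sqrt_nonneg
      (n2 (Θ * Θᵀ - Matrix.fromBlocks ((2 : ℝ) • Λ) 0 0 ((-2 : ℝ) • Λ)))]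
  rw [n2_fromBlocks] at hMbound
  -- trace identities
  have hPEF : n2 P = ip (Bᵀ * B) (W * Wᵀ) := by
    rw [n2_eq_trace, ip_eq_trace, hP]
    simp only [Matrix.transpose_mul, Matrix.transpose_transpose, Matrix.mul_assoc]
    rw [Matrix.trace_mul_comm Bᵀ (B * (W * Wᵀ))]
    simp only [Matrix.mul_assoc]
  have hEE : n2 (Bᵀ * B) = n2 E := by
    rw [n2_eq_trace, n2_eq_trace, hE]
    simp only [Matrix.transpose_mul, Matrix.transpose_transpose, Matrix.mul_assoc]
    rw [Matrix.trace_mul_comm Bᵀ (B * (Bᵀ * B))]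
    simp only [Matrix.mul_assoc]
  have hFF : n2 (W * Wᵀ) = n2 F := by
    rw [n2_eq_trace, n2_eq_trace, hF]
    simp only [Matrix.transpose_mul, Matrix.transpose_transpose, Matrix.mul_assoc]
    rw [Matrix.trace_mul_comm W (Wᵀ * (W * Wᵀ))]
    simp only [Matrix.mul_assoc]
  -- n2 a ≤ n2 P
  have hPPt : (ip P Pᵀ) ^ 2 ≤ (n2 P) ^ 2 := by
    have := ip_sq_le P Pᵀ
    rwa [n2_transpose, ← sq] at this
  have hPn : 0 ≤ n2 P := n2_nonneg P
  have hipPPt : ip P Pᵀ ≤ n2 P := by nlinarith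
  have hna : n2 a = (1/2) * (n2 P + ip P Pᵀ) := by
    rw [ha, n2_smul, n2_add, n2_transpose]
    ring
  have haP : n2 a ≤ n2 P := by rw [hna]; linarith
  -- Cauchy-Schwarz facts
  have hCS1 : (ip (Bᵀ * B) (W * Wᵀ)) ^ 2 ≤ n2 E * n2 F := by
    have := ip_sq_le (Bᵀ * B) (W * Wᵀ)
    rwa [hEE, hFF] at this
  have hCS2 : (ip a Λ) ^ 2 ≤ n2 a * n2 Λ := ip_sq_le a Λ
  -- symmetry: decomposition of X = B*W - Λ
  have hat : aᵀ = a := by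
    rw [ha, Matrix.transpose_smul, Matrix.transpose_add, Matrix.transpose_transpose]
    rw [add_comm Pᵀ P]
  have hZt : Zᵀ = -Z := by
    rw [hZ, Matrix.transpose_smul, Matrix.transpose_sub, Matrix.transpose_transpose]
    rw [← smul_neg, neg_sub]
  have hipYZ : ip (a - Λ) Z = 0 := by
    have h1 : ip (a - Λ) Z = ip (a - Λ)ᵀ Zᵀ := (ip_transpose _ _).symm
    rw [Matrix.transpose_sub, hat, hΛt, hZt] at h1
    have h2 : ip (a - Λ) (-Z) = -ip (a - Λ) Z := by
      have := ip_smul_right (-1 : ℝ) (a - Λ) Z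
      simpa using this
    rw [h2] at h1
    linarith
  have hXdecomp : B * W - Λ = (a - Λ) + Z := by
    rw [ha, hZ, ← hP]
    module
  -- squared norm of the target
  have hnX : n2 (B * W - Λ) = n2 (a - Λ) + n2 Z := by
    rw [hXdecomp, n2_add, hipYZ]
    ring
  -- express block norms
  have hpar1 : n2 (R + V) + n2 (R - V) = 2 * n2 R + 2 * n2 V := n2_parallelogram R V
  have hpar2 : n2 (C + Z) + n2 (C - Z) = 2 * n2 C + 2 * n2 Z := n2_parallelogram C Z
  have hRC : 2 * n2 R + 2 * n2 C = n2 E + n2 F := by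
    rw [hR, hC, n2_smul, n2_smul]
    have hp := n2_parallelogram E F
    norm_num
    linarith
  have hnV : n2 V = n2 a - 4 * ip a Λ + 4 * n2 Λ := by
    rw [hV, n2_sub, ip_smul_right, n2_smul (2:ℝ) Λ]
    ring
  have hnY : n2 (a - Λ) = n2 a - 2 * ip a Λ + n2 Λ := n2_sub a Λ
  -- final arithmetic
  have hnE : 0 ≤ n2 E := n2_nonneg E
  have hnF : 0 ≤ n2 F := n2_nonneg F
  have hnΛ : 0 ≤ n2 Λ := n2_nonneg Λ
  have hnZ : 0 ≤ n2 Z := n2_nonneg Z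
  have hnan : 0 ≤ n2 a := n2_nonneg a
  rw [← hPEF] at hCS1
  have key1 : ∀ x e f : ℝ, 0 ≤ x → 0 ≤ e → 0 ≤ f → x ^ 2 ≤ e * f → 2 * x ≤ e + f := by
    intro x e f hx he hf hxef
    nlinarith [sq_nonneg (e - f), sq_nonneg (e + f - 2 * x)]
  have hEF2P : 2 * n2 P ≤ n2 E + n2 F := key1 _ _ _ hPn hnE hnF hCS1
  have key2 : ∀ al be ga : ℝ, 0 ≤ al → 0 ≤ ga → be ^ 2 ≤ al * ga →
      0 ≤ 3 * al - 6 * be + 7 * ga := by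
    intro al be ga hal hga hcs
    nlinarith [sq_nonneg (3 * al - 7 * ga), sq_nonneg (3 * al + 7 * ga),
      sq_nonneg (al - ga), mul_nonneg hal hga]
  have h37 : 0 ≤ 3 * n2 a - 6 * ip a Λ + 7 * n2 Λ := key2 _ _ _ hnan hnΛ hCS2
  have hkey : n2 (B * W - Λ) ≤ δ ^ 2 := by
    rw [hnX, hnY]
    linarith [hMbound, hpar1, hpar2, hRC, hnV, haP, hEF2P, h37, hnZ]
  rw [frobNorm_eq]
  calc Real.sqrt (n2 (B * W - Λ)) ≤ Real.sqrt (δ ^ 2) := Real.sqrt_le_sqrt hkey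
    _ = δ := Real.sqrt_sq hδ.le
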